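/- More generally, if A ∈ C_k is an n-qubit diagonal unitary with A_{11} = 1, then every diagonal entry of A is a 2^k-th root of unity: A_{jj} = e^{i m_j π/2^{k-1}} for integers m_j. -/

import Mathlib

open Matrix Complex

/-- Index type for `n`-qubit computational basis states. -/
abbrev Q (n : ℕ) := Fin n → Fin 2

/-- The four single-qubit Pauli matrices I, X, Y, Z. -/
noncomputable def pauli1 : Fin 4 → Matrix (Fin 2) (Fin 2) ℂ :=
  ![1, !![0, 1; 1, 0], !![0, -Complex.I; Complex.I, 0], !![1, 0; 0, -1]]

/-- The tensor product of `n` single-qubit operators. -/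
noncomputable def tensorOp {n : ℕ} (f : Fin n → Matrix (Fin 2) (Fin 2) ℂ) :
    Matrix (Q n) (Q n) ℂ :=
  Matrix.of fun x y => ∏ i, f i (x i) (y i)

/-- The `n`-qubit Pauli group: tensor products of Pauli matrices with phases ±1, ±i. -/
noncomputable def PauliGroup (n : ℕ) : Set (Matrix (Q n) (Q n) ℂ) :=
  { M | ∃ (s : Fin 4) (f : Fin n → Fin 4),
      M = Complex.I ^ (s : ℕ) • tensorOp fun i => pauli1 (f i) }

/-- The Clifford hierarchy: `Ck n 1` is the Pauli group and
`Ck n (k+1) = {U unitary : U P U† ∈ Ck n k for all Paulis P}`. -/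
noncomputable def Ck (n : ℕ) : ℕ → Set (Matrix (Q n) (Q n) ℂ)
  | 0 => PauliGroup n
  | 1 => PauliGroup n
  | (k + 2) => { U | U ∈ Matrix.unitaryGroup (Q n) ℂ ∧
      ∀ P ∈ PauliGroup n, U * P * Uᴴ ∈ Ck n (k + 1) }

lemma Q.add_self {n : ℕ} (x : Q n) : x + x = 0 := by
  funext i
  have : ∀ a : Fin 2, a + a = 0 := by decide
  exact this (x i)

noncomputable def SD {n : ℕ} (D : Q n → ℂ) (S : Q n) : Matrix (Q n) (Q n) ℂ :=
  Matrix.of fun x y => if x + S = y then D x else 0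

lemma SD_mul {n : ℕ} (D E : Q n → ℂ) (S T : Q n) :
    SD D S * SD E T = SD (fun x => D x * E (x + S)) (S + T) := by
  ext x z
  simp only [Matrix.mul_apply, SD, Matrix.of_apply]
  rw [Finset.sum_eq_single (x + S)]
  · simp [add_assoc]
  · intro y _ hy; simp [Ne.symm hy]
  · simp

lemma SD_conjT {n : ℕ} (D : Q n → ℂ) (S : Q n) :
    (SD D S)ᴴ = SD (fun x => (starRingEnd ℂ) (D (x + S))) S := by
  ext x y
  simp only [Matrix.conjTranspose_apply, SD, Matrix.of_apply]
  have h : y + S = x ↔ x + S = y := by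
    constructor <;> intro h <;>
      [skip; skip] <;>
      · rw [← h, add_assoc, Q.add_self, add_zero]
  by_cases hc : x + S = y
  · rw [if_pos (h.mpr hc), if_pos hc, hc]; rfl
  · rw [if_neg (fun hh => hc (h.mp hh)), if_neg hc]; exact star_zero _

lemma XT_pauli {n : ℕ} (T : Q n) : SD (fun _ => (1:ℂ)) T ∈ PauliGroup n := by
  refine ⟨0, fun i => if T i = 0 then 0 else 1, ?_⟩
  ext x y
  simp only [SD, Matrix.of_apply, Fin.val_zero, pow_zero, one_smul, tensorOp]
  have h : ∀ i, pauli1 (if T i = 0 then 0 else 1) (x i) (y i)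
      = if x i + T i = y i then 1 else 0 := by
    intro i
    have : ∀ a b c : Fin 2, pauli1 (if c = 0 then 0 else 1) a b
        = if a + c = b then 1 else 0 := by
      intro a b c
      fin_cases a <;> fin_cases b <;> fin_cases c <;>
        simp [pauli1, Matrix.one_apply]
    exact this _ _ _
  simp only [h, Finset.prod_boole]
  congr 1
  simp only [eq_iff_iff]
  constructor
  · intro hh i _; exact congrFun hh i
  · intro hh; funext i; exact hh i (Finset.mem_univ i)

lemma SD_unitary_apply {n : ℕ} {D : Q n → ℂ} {S : Q n}
    (h : SD D S ∈ Matrix.unitaryGroup (Q n) ℂ) (x : Q n) :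
    D x * (starRingEnd ℂ) (D x) = 1 := by
  have h1 : SD D S * star (SD D S) = 1 := (Matrix.mem_unitaryGroup_iff.mp h)
  rw [Matrix.star_eq_conjTranspose, SD_conjT, SD_mul] at h1
  have := congrFun (congrFun h1 x) x
  simp only [SD, Matrix.of_apply, Q.add_self, add_zero, if_pos rfl,
    Matrix.one_apply_eq] at this
  rwa [if_true, add_assoc, Q.add_self S, add_zero] at this

lemma SD_unitary_ne {n : ℕ} {D : Q n → ℂ} {S : Q n}
    (h : SD D S ∈ Matrix.unitaryGroup (Q n) ℂ) (x : Q n) : D x ≠ 0 := by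
  intro h0
  have := SD_unitary_apply h x
  rw [h0, zero_mul] at this
  exact zero_ne_one this

lemma pauli_pair (g : Fin 4) (s a b c : Fin 2) (hne : pauli1 g a (a + s) ≠ 0) :
    pauli1 g b (b + s) * (starRingEnd ℂ) (pauli1 g c (c + s)) = 1 ∨
    pauli1 g b (b + s) * (starRingEnd ℂ) (pauli1 g c (c + s)) = -1 := by
  fin_cases g <;> fin_cases s <;> fin_cases a <;> fin_cases b <;> fin_cases c <;>
    simp_all [pauli1, Matrix.one_apply, Complex.ext_iff]

lemma base_case {n : ℕ} (D : Q n → ℂ) (S : Q n) (h : SD D S ∈ PauliGroup n)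
    (hne : ∃ x, D x ≠ 0) (x y : Q n) :
    ∃ m : ℤ, D x * (starRingEnd ℂ) (D y)
      = Complex.exp ((m : ℂ) * (Real.pi : ℂ) * Complex.I) := by
  obtain ⟨s, f, heq⟩ := h
  have hD : ∀ z : Q n, D z
      = Complex.I ^ (s : ℕ) * ∏ i, pauli1 (f i) (z i) (z i + S i) := by
    intro z
    have h1 := congrFun (congrFun heq z) (z + S)
    simp only [SD, Matrix.of_apply, if_pos rfl, Matrix.smul_apply, smul_eq_mul,
      tensorOp, Pi.add_apply] at h1
    exact h1
  obtain ⟨x₀, hx₀⟩ := hne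
  rw [hD x₀, mul_ne_zero_iff] at hx₀
  have hfac : ∀ i : Fin n, pauli1 (f i) (x₀ i) (x₀ i + S i) ≠ 0 := by
    intro i
    exact Finset.prod_ne_zero_iff.mp hx₀.2 i (Finset.mem_univ i)
  have hI : Complex.I ^ (s : ℕ) * (-Complex.I) ^ (s : ℕ) = 1 := by
    rw [← mul_pow]
    norm_num [Complex.I_mul_I]
  have hmain : D x * (starRingEnd ℂ) (D y)
      = ∏ i, (pauli1 (f i) (x i) (x i + S i)
          * (starRingEnd ℂ) (pauli1 (f i) (y i) (y i + S i))) := by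
    calc D x * (starRingEnd ℂ) (D y)
        = (Complex.I ^ (s : ℕ) * (-Complex.I) ^ (s : ℕ))
          * ((∏ i, pauli1 (f i) (x i) (x i + S i))
            * (∏ i, (starRingEnd ℂ) (pauli1 (f i) (y i) (y i + S i)))) := by
          rw [hD x, hD y, _root_.map_mul, map_pow, Complex.conj_I, map_prod]
          ring
      _ = ∏ i, (pauli1 (f i) (x i) (x i + S i)
          * (starRingEnd ℂ) (pauli1 (f i) (y i) (y i + S i))) := by
          rw [hI, one_mul, ← Finset.prod_mul_distrib]
  have hprod : (∏ i, (pauli1 (f i) (x i) (x i + S i)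
          * (starRingEnd ℂ) (pauli1 (f i) (y i) (y i + S i)))) = 1 ∨
      (∏ i, (pauli1 (f i) (x i) (x i + S i)
          * (starRingEnd ℂ) (pauli1 (f i) (y i) (y i + S i)))) = -1 := by
    refine Finset.prod_induction _ (fun z => z = 1 ∨ z = -1) ?_ (Or.inl rfl) ?_
    · rintro u v (rfl | rfl) (rfl | rfl) <;> norm_num
    · intro i _
      exact pauli_pair (f i) (S i) (x₀ i) (x i) (y i) (hfac i)
  rcases hprod with hp | hp
  · refine ⟨0, ?_⟩
    rw [hmain, hp]
    norm_num
  · refine ⟨1, ?_⟩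
    rw [hmain, hp]
    rw [show ((1 : ℤ) : ℂ) * (Real.pi : ℂ) * Complex.I
        = (Real.pi : ℂ) * Complex.I by push_cast; ring, Complex.exp_pi_mul_I]

lemma key_lemma {n : ℕ} : ∀ e : ℕ, ∀ D : Q n → ℂ, ∀ S : Q n,
    SD D S ∈ Ck n (e + 1) → (∃ x, D x ≠ 0) → ∀ x y : Q n,
    ∃ m : ℤ, D x * (starRingEnd ℂ) (D y)
      = Complex.exp ((m : ℂ) * (Real.pi : ℂ) * Complex.I / 2 ^ e) := by
  intro e
  induction e with
  | zero =>
    intro D S h hne x y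
    obtain ⟨m, hm⟩ := base_case D S h hne x y
    exact ⟨m, by rw [hm]; norm_num⟩
  | succ e ih =>
    intro D S h hne x y
    obtain ⟨hu, hP⟩ : SD D S ∈ Matrix.unitaryGroup (Q n) ℂ ∧
        ∀ P ∈ PauliGroup n, SD D S * P * (SD D S)ᴴ ∈ Ck n (e + 1) := h
    set T := x + y with hT
    have hrw : SD D S * SD (fun _ => (1:ℂ)) T * (SD D S)ᴴ
        = SD (fun z => D z * (starRingEnd ℂ) (D (z + T))) T := by
      rw [SD_conjT, SD_mul, SD_mul]
      have hS : S + T + S = T := by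
        rw [add_comm S T, add_assoc, Q.add_self, add_zero]
      have hz : ∀ z : Q n, z + (S + T) + S = z + T := by
        intro z
        rw [add_assoc, add_assoc, ← add_assoc S T S, add_comm (S+T) S,
          ← add_assoc S S T, Q.add_self, zero_add]
      simp only [mul_one, hz, hS]
    have hmem := hP _ (XT_pauli T)
    rw [hrw] at hmem
    have hne' : ∃ z, (fun z => D z * (starRingEnd ℂ) (D (z + T))) z ≠ 0 := by
      refine ⟨x, mul_ne_zero (SD_unitary_ne hu x) ?_⟩
      simpa using SD_unitary_ne hu (x + T)
    obtain ⟨m, hm⟩ := ih _ _ hmem hne' x y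
    have hx : x + T = y := by rw [hT, ← add_assoc, Q.add_self, zero_add]
    have hy : y + T = x := by
      rw [hT, add_comm x y, ← add_assoc, Q.add_self, zero_add]
    rw [hx, hy] at hm
    have hz2 : (D x * (starRingEnd ℂ) (D y)) ^ 2
        = Complex.exp ((m : ℂ) * (Real.pi : ℂ) * Complex.I / 2 ^ e) := by
      rw [← hm]
      simp only [_root_.map_mul, Complex.conj_conj]
      ring
    set w := Complex.exp ((m : ℂ) * (Real.pi : ℂ) * Complex.I / 2 ^ (e + 1)) with hw
    have hw2 : w ^ 2 = Complex.exp ((m : ℂ) * (Real.pi : ℂ) * Complex.I / 2 ^ e) := by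
      rw [hw, ← Complex.exp_nat_mul]
      congr 1
      have h2 : (2 : ℂ) ^ e ≠ 0 := pow_ne_zero _ two_ne_zero
      rw [pow_succ]
      push_cast
      field_simp
    have hfac : (D x * (starRingEnd ℂ) (D y) - w)
        * (D x * (starRingEnd ℂ) (D y) + w) = 0 := by
      linear_combination hz2 - hw2
    rcases mul_eq_zero.mp hfac with h0 | h0
    · exact ⟨m, sub_eq_zero.mp h0⟩
    · refine ⟨m + 2 ^ (e + 1), ?_⟩
      have hneg : D x * (starRingEnd ℂ) (D y) = -w := eq_neg_of_add_eq_zero_left h0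
      rw [hneg, hw, show -Complex.exp ((m : ℂ) * (Real.pi : ℂ) * Complex.I / 2 ^ (e+1))
          = Complex.exp ((Real.pi : ℂ) * Complex.I)
            * Complex.exp ((m : ℂ) * (Real.pi : ℂ) * Complex.I / 2 ^ (e+1)) by
          rw [Complex.exp_pi_mul_I]; ring, ← Complex.exp_add]
      congr 1
      have h2 : (2 : ℂ) ^ (e + 1) ≠ 0 := pow_ne_zero _ two_ne_zero
      push_cast
      field_simp
      ring

/-- a diagonal `n`-qubit gate in `C_k` (`k ≥ 1`), normalized so
that its first diagonal entry is `1`, has all diagonal entries `2^k`-th roots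
of unity: `A_jj = e^{i m_j π/2^{k-1}}` for integers `m_j`. -/
theorem diagonal_Ck_entries_roots_of_unity (n k : ℕ) (hk : 1 ≤ k)
    (A : Matrix (Q n) (Q n) ℂ) (hA : A ∈ Ck n k) (hdiag : A.IsDiag)
    (h11 : A (fun _ => 0) (fun _ => 0) = 1) :
    ∀ j : Q n, ∃ m : ℤ,
      A j j = Complex.exp ((m : ℂ) * (Real.pi : ℂ) * Complex.I / 2 ^ (k - 1)) := by
  obtain ⟨e, rfl⟩ : ∃ e, k = e + 1 := ⟨k - 1, by omega⟩
  have hSD : A = SD (fun x => A x x) 0 := by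
    ext x y
    by_cases hxy : x = y
    · subst hxy; simp [SD]
    · rw [hdiag hxy]; simp [SD, hxy]
  intro j
  have hz : (fun _ => (0 : Fin 2)) = (0 : Q n) := rfl
  obtain ⟨m, hm⟩ := key_lemma e (fun x => A x x) 0 (hSD ▸ hA)
    ⟨(0 : Q n), by show A (fun _ => 0) (fun _ => 0) ≠ 0; rw [h11]; exact one_ne_zero⟩ j (0 : Q n)
  rw [← hz] at hm
  rw [h11, _root_.map_one, mul_one] at hm
  exact ⟨m, by simpa using hm⟩
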